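/- For every pair (j₁,j₂) ∈ Θ₂ and every λ ∈ (0,1/8], one has Σ_{p ∈ ℤ, p ≠ p₀} |μ(j₁,j₂,p,λ)| ≤ K λ, where K is a constant depending only on f and I. -/

import Mathlib

open Set Real MeasureTheory

lemma sum_one_div_sqrt (N : ℕ) :
    ∑ k ∈ Finset.Icc 1 N, (1 : ℝ) / Real.sqrt k ≤ 2 * Real.sqrt N := by
  induction N with
  | zero => simp
  | succ n ih =>
    rw [Finset.sum_Icc_succ_top (by omega)]
    have ha : Real.sqrt n ^ 2 = n := Real.sq_sqrt (by positivity)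
    have hb : Real.sqrt (n + 1 : ℕ) ^ 2 = (n + 1 : ℕ) := Real.sq_sqrt (by positivity)
    have hb' : (0:ℝ) < Real.sqrt ((n:ℕ) + 1 : ℕ) := Real.sqrt_pos.mpr (by positivity)
    have ha' : (0:ℝ) ≤ Real.sqrt n := Real.sqrt_nonneg _
    have h1 : (1:ℝ) / Real.sqrt ((n+1 : ℕ)) ≤ 2 * Real.sqrt ((n+1:ℕ)) - 2 * Real.sqrt n := by
      rw [div_le_iff₀ hb']
      push_cast at ha hb ⊢
      nlinarith [sq_nonneg (Real.sqrt n - Real.sqrt ((n:ℝ)+1))]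
    calc ∑ k ∈ Finset.Icc 1 n, (1 : ℝ) / Real.sqrt k + 1 / Real.sqrt ((n+1 : ℕ))
        ≤ 2 * Real.sqrt n + (2 * Real.sqrt ((n+1:ℕ)) - 2 * Real.sqrt n) :=
          add_le_add ih h1
      _ = 2 * Real.sqrt ((n+1:ℕ)) := by ring

lemma mono_of_hasDerivAt {u u' : ℝ → ℝ} (hu : ∀ x, HasDerivAt u (u' x) x)
    (h : ∀ x, 0 ≤ u' x) : Monotone u := by
  apply monotone_of_deriv_nonneg (fun x => (hu x).differentiableAt)
  intro x; rw [(hu x).deriv]; exact h x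

lemma monoOn_Ici_of_hasDerivAt {u u' : ℝ → ℝ} (a : ℝ) (hu : ∀ x, HasDerivAt u (u' x) x)
    (h : ∀ x, a ≤ x → 0 ≤ u' x) : MonotoneOn u (Ici a) := by
  apply monotoneOn_of_deriv_nonneg (convex_Ici a)
    (fun x _ => (hu x).continuousAt.continuousWithinAt)
    (fun x _ => (hu x).differentiableAt.differentiableWithinAt)
  intro x hx
  rw [interior_Ici] at hx
  rw [(hu x).deriv]; exact h x (le_of_lt hx)

lemma antiOn_Iic_of_hasDerivAt {u u' : ℝ → ℝ} (a : ℝ) (hu : ∀ x, HasDerivAt u (u' x) x)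
    (h : ∀ x, x ≤ a → u' x ≤ 0) : AntitoneOn u (Iic a) := by
  apply antitoneOn_of_deriv_nonpos (convex_Iic a)
    (fun x _ => (hu x).continuousAt.continuousWithinAt)
    (fun x _ => (hu x).differentiableAt.differentiableWithinAt)
  intro x hx
  rw [interior_Iic] at hx
  rw [(hu x).deriv]; exact h x (le_of_lt hx)

lemma sign_const {c₁ : ℝ} (hc₁ : 0 < c₁) {f'' : ℝ → ℝ} (hf'' : Continuous f'')
    (hc : ∀ x, c₁ ≤ |f'' x|) : (∀ x, c₁ ≤ f'' x) ∨ (∀ x, f'' x ≤ -c₁) := by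
  by_contra hcon
  push_neg at hcon
  obtain ⟨⟨a, ha⟩, ⟨b, hb⟩⟩ := hcon
  have ha' : f'' a ≤ -c₁ := by
    rcases abs_cases (f'' a) with ⟨h1, _⟩ | ⟨h1, _⟩ <;> [linarith [hc a]; linarith [hc a]]
  have hb' : c₁ ≤ f'' b := by
    rcases abs_cases (f'' b) with ⟨h1, _⟩ | ⟨h1, _⟩ <;> [linarith [hc b]; linarith [hc b]]
  have : (0:ℝ) ∈ uIcc (f'' a) (f'' b) := by
    rw [mem_uIcc]; left; constructor <;> linarith
  obtain ⟨x, _, hx⟩ := intermediate_value_uIcc (hf''.continuousOn (s := uIcc a b)) this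
  have := hc x
  rw [hx] at this
  simp at this
  linarith

set_option maxHeartbeats 4000000

theorem sum_mu_over_p_ne_p0
    (ξ η c₁ c₂ : ℝ) (hξη : ξ ≤ η) (hc₁ : 0 < c₁) (hc₁₂ : c₁ ≤ c₂)
    (f f' f'' : ℝ → ℝ)
    (hf : ∀ x, HasDerivAt f (f' x) x)
    (hf' : ∀ x, HasDerivAt f' (f'' x) x)
    (hf'' : Continuous f'')
    (hbd : ∀ x, c₁ ≤ |f'' x| ∧ |f'' x| ≤ c₂) :
    ∃ K : ℝ, 0 < K ∧
      ∀ Mmax : ℝ, IsGreatest ((fun x => |f' x|) '' Icc ξ η) Mmax →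
      ∀ j₁ j₂ : ℤ, j₂ ≠ 0 → |(j₁ : ℝ)| ≤ 2 * (1 + Mmax) * |(j₂ : ℝ)| →
      ∀ x₀ : ℝ, (j₁ : ℝ) + (j₂ : ℝ) * f' x₀ = 0 →
      ∀ p₀ : ℤ,
        -(1/2) < ((j₁ : ℝ) * x₀ + (j₂ : ℝ) * f x₀) - (p₀ : ℝ) →
        ((j₁ : ℝ) * x₀ + (j₂ : ℝ) * f x₀) - (p₀ : ℝ) ≤ 1/2 →
      ∀ lam : ℝ, 0 < lam → lam ≤ 1/8 →
        (∑' p : {p : ℤ // p ≠ p₀},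
          (volume {x ∈ Icc ξ η |
            |(j₁ : ℝ) * x + (j₂ : ℝ) * f x - ((p : ℤ) : ℝ)| < lam}).toReal)
          ≤ K * lam := by
  have hc₂ : 0 < c₂ := lt_of_lt_of_le hc₁ hc₁₂
  -- the sign of f''
  obtain ⟨e, habse, he⟩ : ∃ e : ℝ, |e| = 1 ∧ ∀ x, c₁ ≤ e * f'' x := by
    rcases sign_const hc₁ hf'' (fun x => (hbd x).1) with h | h
    · exact ⟨1, abs_one, fun x => by simpa using h x⟩
    · refine ⟨-1, by norm_num, fun x => ?_⟩
      have := h x; linarith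
  have heub : ∀ x, e * f'' x ≤ c₂ := by
    intro x
    calc e * f'' x ≤ |e * f'' x| := le_abs_self _
      _ = |f'' x| := by rw [abs_mul, habse, one_mul]
      _ ≤ c₂ := (hbd x).2
  -- constants
  set M0 : ℝ := sSup ((fun x => |f' x|) '' Icc ξ η) with hM0def
  set D : ℝ := 3 * (1 + M0) / c₁ with hDdef
  set B : ℝ := c₂ * D ^ 2 / 2 + 1 with hBdef
  set A : ℝ := 16 * Real.sqrt c₂ / c₁ with hAdef
  have hA0 : 0 < A := by
    have : 0 < Real.sqrt c₂ := Real.sqrt_pos.mpr hc₂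
    positivity
  have hB0 : 0 < B := by positivity
  refine ⟨4 * A * Real.sqrt B + 1, by positivity, ?_⟩
  intro Mmax hM j₁ j₂ hj₂ hj₁ x₀ hx₀ p₀ hp₀l hp₀r lam hlam hlam8
  have hM0 : M0 = Mmax := hM.csSup_eq
  have hMub : ∀ x ∈ Icc ξ η, |f' x| ≤ Mmax := fun x hx => hM.2 ⟨x, hx, rfl⟩
  have hMnn : 0 ≤ Mmax := by
    obtain ⟨z, _, hz⟩ := hM.1
    rw [← hz]; positivity
  set q : ℝ := |(j₂ : ℝ)| with hqdef
  have hq1 : 1 ≤ q := by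
    rw [hqdef, ← Int.cast_abs]
    exact_mod_cast Int.one_le_abs hj₂
  have hq0 : 0 < q := lt_of_lt_of_le one_pos hq1
  obtain ⟨s2, habss2, hs2⟩ : ∃ s2 : ℝ, |s2| = 1 ∧ s2 * (j₂ : ℝ) = q := by
    rcases abs_cases ((j₂ : ℝ)) with ⟨h1, _⟩ | ⟨h1, _⟩
    · exact ⟨1, abs_one, by rw [one_mul, hqdef, h1]⟩
    · exact ⟨-1, by norm_num, by rw [hqdef, h1]; ring⟩
  set σ : ℝ := e * s2 with hσdef
  have habsσ : |σ| = 1 := by rw [hσdef, abs_mul, habse, habss2, one_mul]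
  have hσj : σ * (j₂ : ℝ) = e * q := by rw [hσdef, mul_assoc, hs2]
  set F : ℝ → ℝ := fun x => (j₁ : ℝ) * x + (j₂ : ℝ) * f x with hFdef
  set G : ℝ → ℝ := fun x => σ * ((j₁ : ℝ) * x + (j₂ : ℝ) * f x) with hGdef
  set G' : ℝ → ℝ := fun x => σ * ((j₁ : ℝ) + (j₂ : ℝ) * f' x) with hG'def
  have hlin : ∀ (c t : ℝ), HasDerivAt (fun x => c * x) c t := fun c t => by
    simpa using (hasDerivAt_id t).const_mul c
  have hG : ∀ x, HasDerivAt G (G' x) x := by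
    intro x
    have h1 : HasDerivAt (fun x => (j₁ : ℝ) * x + (j₂ : ℝ) * f x)
        ((j₁ : ℝ) + (j₂ : ℝ) * f' x) x := (hlin (j₁ : ℝ) x).add ((hf x).const_mul _)
    exact h1.const_mul σ
  have hG' : ∀ x, HasDerivAt G' (σ * (j₂ : ℝ) * f'' x) x := by
    intro x
    have h1 : HasDerivAt (fun x => (j₁ : ℝ) + (j₂ : ℝ) * f' x) ((j₂ : ℝ) * f'' x) x := by
      simpa using (hf' x).const_mul ((j₂:ℝ))
    have := h1.const_mul σ
    simpa [mul_assoc] using this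
  have hG''lb : ∀ x, c₁ * q ≤ σ * (j₂ : ℝ) * f'' x := by
    intro x
    rw [hσj]
    have := he x
    calc c₁ * q = q * c₁ := by ring
      _ ≤ q * (e * f'' x) := mul_le_mul_of_nonneg_left this hq0.le
      _ = e * q * f'' x := by ring
  have hG''ub : ∀ x, σ * (j₂ : ℝ) * f'' x ≤ c₂ * q := by
    intro x
    rw [hσj]
    have := heub x
    calc e * q * f'' x = q * (e * f'' x) := by ring
      _ ≤ q * c₂ := mul_le_mul_of_nonneg_left this hq0.le
      _ = c₂ * q := by ring
  have hG'x₀ : G' x₀ = 0 := by rw [hG'def]; simp [hx₀]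
  have hGF : ∀ x y, G x - G y ≤ |F x - F y| := by
    intro x y
    calc G x - G y = σ * (F x - F y) := by rw [hGdef, hFdef]; ring
      _ ≤ |σ * (F x - F y)| := le_abs_self _
      _ = |F x - F y| := by rw [abs_mul, habsσ, one_mul]
  have habsFG : ∀ x y, |F x - F y| = |G x - G y| := by
    intro x y
    rw [show G x - G y = σ * (F x - F y) by rw [hGdef, hFdef]; ring,
      abs_mul, habsσ, one_mul]
  -- derivative growth
  have hd1 : ∀ x y, x ≤ y → G' x + c₁ * q * (y - x) ≤ G' y := by
    intro x y hxy
    have hm : Monotone (fun t => G' t - c₁ * q * t) := by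
      apply mono_of_hasDerivAt (u' := fun t => σ * (j₂ : ℝ) * f'' t - c₁ * q)
        (fun t => (hG' t).sub (hlin (c₁ * q) t))
      intro t; have := hG''lb t; linarith
    have := hm hxy
    simp only at this
    linarith
  have hd2 : ∀ x y, x ≤ y → G' y ≤ G' x + c₂ * q * (y - x) := by
    intro x y hxy
    have hm : Monotone (fun t => c₂ * q * t - G' t) := by
      apply mono_of_hasDerivAt (u' := fun t => c₂ * q - σ * (j₂ : ℝ) * f'' t)
        (fun t => (hlin (c₂ * q) t).sub (hG' t))
      intro t; have := hG''ub t; linarith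
    have := hm hxy
    simp only at this
    linarith
  have hdlb : ∀ x, x₀ ≤ x → c₁ * q * (x - x₀) ≤ G' x := by
    intro x hx; have := hd1 x₀ x hx; rw [hG'x₀] at this; linarith
  have hdlb' : ∀ x, x ≤ x₀ → G' x ≤ c₁ * q * (x - x₀) := by
    intro x hx; have := hd1 x x₀ hx; rw [hG'x₀] at this
    have h2 : c₁ * q * (x₀ - x) = -(c₁ * q * (x - x₀)) := by ring
    linarith
  have hdub : ∀ x, x₀ ≤ x → G' x ≤ c₂ * q * (x - x₀) := by
    intro x hx; have := hd2 x₀ x hx; rw [hG'x₀] at this; linarith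
  have hdub' : ∀ x, x ≤ x₀ → c₂ * q * (x - x₀) ≤ G' x := by
    intro x hx; have := hd2 x x₀ hx; rw [hG'x₀] at this
    have h2 : c₂ * q * (x₀ - x) = -(c₂ * q * (x - x₀)) := by ring
    linarith
  -- Taylor bounds
  have hsq : ∀ x₁ t : ℝ, HasDerivAt (fun s => (s - x₁) ^ 2) (2 * (t - x₁)) t := by
    intro x₁ t
    simpa using ((hasDerivAt_id t).sub_const x₁).fun_pow 2
  have hT1 : ∀ x, c₁ * q / 2 * (x - x₀) ^ 2 ≤ G x - G x₀ := by
    intro x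
    set φ : ℝ → ℝ := fun t => G t - c₁ * q / 2 * (t - x₀) ^ 2 with hφdef
    have hφ : ∀ t, HasDerivAt φ (G' t - c₁ * q * (t - x₀)) t := by
      intro t
      have h2 := (hsq x₀ t).const_mul (c₁ * q / 2)
      have h3 := (hG t).fun_sub h2
      refine h3.congr_deriv ?_; ring
    have hkey : φ x₀ ≤ φ x := by
      rcases le_total x₀ x with h | h
      · exact monoOn_Ici_of_hasDerivAt x₀ hφ
          (fun t ht => by have := hdlb t ht; linarith) self_mem_Ici h h
      · exact antiOn_Iic_of_hasDerivAt x₀ hφ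
          (fun t ht => by have := hdlb' t ht; linarith) h self_mem_Iic h
    simp only [hφdef] at hkey
    have e0 : c₁ * q / 2 * (x₀ - x₀) ^ 2 = 0 := by ring
    linarith
  have hT2 : ∀ x, G x - G x₀ ≤ c₂ * q / 2 * (x - x₀) ^ 2 := by
    intro x
    set ψ : ℝ → ℝ := fun t => c₂ * q / 2 * (t - x₀) ^ 2 - G t with hψdef
    have hψ : ∀ t, HasDerivAt ψ (c₂ * q * (t - x₀) - G' t) t := by
      intro t
      have h2 := (hsq x₀ t).const_mul (c₂ * q / 2)
      have h3 := h2.fun_sub (hG t)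
      refine h3.congr_deriv ?_; ring
    have hkey : ψ x₀ ≤ ψ x := by
      rcases le_total x₀ x with h | h
      · exact monoOn_Ici_of_hasDerivAt x₀ hψ
          (fun t ht => by have := hdub t ht; linarith) self_mem_Ici h h
      · exact antiOn_Iic_of_hasDerivAt x₀ hψ
          (fun t ht => by have := hdub' t ht; linarith) h self_mem_Iic h
    simp only [hψdef] at hkey
    have e0 : c₂ * q / 2 * (x₀ - x₀) ^ 2 = 0 := by ring
    linarith
  have hGnn : ∀ x, 0 ≤ G x - G x₀ := by
    intro x
    have h0 : 0 ≤ c₁ * q / 2 * (x - x₀) ^ 2 := by positivity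
    linarith [hT1 x]
  -- branch bounds
  have hBrP : ∀ x y, x₀ ≤ x → x ≤ y → c₁ * q * (x - x₀) * (y - x) ≤ G y - G x := by
    intro x y hx hxy
    have hm : MonotoneOn (fun t => G t - c₁ * q * (x - x₀) * t) (Ici x) := by
      apply monoOn_Ici_of_hasDerivAt x
        (u' := fun t => G' t - c₁ * q * (x - x₀))
        (fun t => (hG t).sub (hlin (c₁ * q * (x - x₀)) t))
      intro t ht
      have h1 := hdlb t (le_trans hx ht)
      have h2 : c₁ * q * (x - x₀) ≤ c₁ * q * (t - x₀) :=
        mul_le_mul_of_nonneg_left (by linarith) (by positivity)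
      linarith
    have := hm self_mem_Ici hxy hxy
    simp only at this
    linarith
  have hBrM : ∀ x y, x ≤ x₀ → y ≤ x → c₁ * q * (x₀ - x) * (x - y) ≤ G y - G x := by
    intro x y hx hyx
    have hm : AntitoneOn (fun t => G t + c₁ * q * (x₀ - x) * t) (Iic x) := by
      apply antiOn_Iic_of_hasDerivAt x
        (u' := fun t => G' t + c₁ * q * (x₀ - x))
        (fun t => (hG t).add (hlin (c₁ * q * (x₀ - x)) t))
      intro t ht
      have h1 := hdlb' t (le_trans ht hx)
      have h2 : c₁ * q * (t - x₀) ≤ c₁ * q * (x - x₀) :=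
        mul_le_mul_of_nonneg_left (by linarith) (by positivity)
      have h3 : c₁ * q * (x - x₀) = -(c₁ * q * (x₀ - x)) := by ring
      linarith
    have := hm hyx self_mem_Iic hyx
    simp only at this
    linarith
  -- distance from x₀ to I
  have hf'x₀ : |f' x₀| ≤ 2 * (1 + Mmax) := by
    have h1 : (j₂ : ℝ) * f' x₀ = -(j₁ : ℝ) := by linarith
    have h2 : q * |f' x₀| = |(j₁ : ℝ)| := by
      rw [hqdef, ← abs_mul, h1, abs_neg]
    have h3 : |f' x₀| * q ≤ (2 * (1 + Mmax)) * q := by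
      rw [mul_comm, h2]; exact hj₁
    exact le_of_mul_le_mul_right h3 hq0
  have hef : ∀ a b, a ≤ b → e * f' a + c₁ * (b - a) ≤ e * f' b := by
    intro a b hab
    have hm : Monotone (fun t => e * f' t - c₁ * t) := by
      apply mono_of_hasDerivAt (u' := fun t => e * f'' t - c₁)
        (fun t => ((hf' t).const_mul e).sub (hlin c₁ t))
      intro t; have := he t; linarith
    have := hm hab
    simp only at this
    linarith
  have habe : ∀ y : ℝ, |e * y| = |y| := fun y => by rw [abs_mul, habse, one_mul]
  have hD0 : 0 < D := by rw [hDdef, hM0]; positivity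
  have hdist : ∀ x ∈ Icc ξ η, |x - x₀| ≤ D := by
    intro x hx
    have hfx := hMub x hx
    rw [abs_le]
    constructor
    · rcases le_total x₀ x with h | h
      · linarith [abs_nonneg (x - x₀), abs_of_nonneg (sub_nonneg.mpr h)]
      · have h1 := hef x x₀ h
        have h2 : e * f' x₀ ≤ |f' x₀| := le_trans (le_abs_self _) (le_of_eq (habe _))
        have h3 : -|f' x| ≤ e * f' x := by
          have := neg_abs_le (e * f' x); rw [habe] at this; exact this
        have h4 : c₁ * (x₀ - x) ≤ 3 * (1 + Mmax) := by linarith [hf'x₀]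
        have h5 : x₀ - x ≤ D := by
          rw [hDdef, hM0, le_div_iff₀ hc₁]
          linarith [mul_comm c₁ (x₀ - x)]
        linarith
    · rcases le_total x x₀ with h | h
      · have : x - x₀ ≤ 0 := by linarith
        linarith
      · have h1 := hef x₀ x h
        have h2 : -|f' x₀| ≤ e * f' x₀ := by
          have := neg_abs_le (e * f' x₀); rw [habe] at this; exact this
        have h3 : e * f' x ≤ |f' x| := le_trans (le_abs_self _) (le_of_eq (habe _))
        have h4 : c₁ * (x - x₀) ≤ 3 * (1 + Mmax) := by linarith [hf'x₀]
        rw [hDdef, hM0, le_div_iff₀ hc₁]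
        linarith [mul_comm c₁ (x - x₀)]
  have hFx₀ : |F x₀ - (p₀ : ℝ)| ≤ 1/2 := by
    rw [hFdef]
    exact abs_le.mpr ⟨by linarith, hp₀r⟩
  set sq' : ℝ := Real.sqrt q with hsq'def
  have hsq'0 : 0 < sq' := Real.sqrt_pos.mpr hq0
  have hsq'2 : sq' ^ 2 = q := Real.sq_sqrt hq0.le
  set sc : ℝ := Real.sqrt c₂ with hscdef
  have hsc0 : 0 < sc := Real.sqrt_pos.mpr hc₂
  have hsc2 : sc ^ 2 = c₂ := Real.sq_sqrt hc₂.le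
  set s3 : ℝ := Real.sqrt 3 with hs3def
  have hs30 : 1 ≤ s3 := by
    rw [hs3def, show (1:ℝ) = Real.sqrt 1 by rw [Real.sqrt_one]]
    exact Real.sqrt_le_sqrt (by norm_num)
  have hs32 : s3 ^ 2 = 3 := Real.sq_sqrt (by norm_num)
  -- per p: the triangle inequality giving distance from x₀
  have htri : ∀ (p : ℤ) (x : ℝ), |((p:ℝ) - (p₀:ℝ))| ≤ |F x - (p:ℝ)| + (G x - G x₀) + 1/2 := by
    intro p x
    have t1 : |((p:ℝ) - (p₀:ℝ))| ≤ |(p:ℝ) - F x| + |F x - (p₀:ℝ)| := abs_sub_le _ _ _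
    have t2 : |F x - (p₀:ℝ)| ≤ |F x - F x₀| + |F x₀ - (p₀:ℝ)| := abs_sub_le _ _ _
    have t3 : |(p:ℝ) - F x| = |F x - (p:ℝ)| := abs_sub_comm _ _
    have t4 : |F x - F x₀| = G x - G x₀ := by
      rw [habsFG]; exact abs_of_nonneg (hGnn x)
    linarith
  -- KEY PER-p BOUND
  have key : ∀ p : ℤ, p ≠ p₀ →
      (volume {x ∈ Icc ξ η | |F x - (p : ℝ)| < lam}).toReal
        ≤ A * lam / (Real.sqrt (((p - p₀).natAbs : ℝ)) * sq') := by
    intro p hp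
    set kR : ℝ := ((p - p₀).natAbs : ℝ) with hkRdef
    have hkR1 : 1 ≤ kR := by
      rw [hkRdef]
      exact_mod_cast Nat.one_le_iff_ne_zero.mpr (Int.natAbs_ne_zero.mpr (sub_ne_zero.mpr hp))
    have hkabs : kR = |(p:ℝ) - (p₀:ℝ)| := by
      rw [hkRdef, Nat.cast_natAbs]
      push_cast
      ring_nf
    set sk : ℝ := Real.sqrt kR with hskdef
    have hsk0 : 0 < sk := Real.sqrt_pos.mpr (by linarith)
    have hsk2 : sk ^ 2 = kR := Real.sq_sqrt (by linarith)
    set r : ℝ := s3 * sk / (2 * sc * sq') with hrdef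
    have hr0 : 0 < r := by positivity
    have hr2 : r ^ 2 = 3 * kR / (4 * (c₂ * q)) := by
      rw [hrdef, div_pow]
      congr 1
      · rw [mul_pow, hs32, hsk2]
      · rw [mul_pow, mul_pow, hsc2, hsq'2]; ring
    set dd : ℝ := A * lam / (4 * (sk * sq')) with hdddef
    have hdd0 : 0 < dd := by positivity
    set Ep : Set ℝ := {x ∈ Icc ξ η | |F x - (p : ℝ)| < lam} with hEpdef
    have hFar : ∀ x ∈ Ep, 3 * kR / 8 ≤ G x - G x₀ := by
      intro x hx
      have hxl : |F x - (p:ℝ)| < lam := hx.2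
      have := htri p x
      rw [← hkabs] at this
      linarith
    have hrd : ∀ x ∈ Ep, r ≤ |x - x₀| := by
      intro x hx
      have h1 := hFar x hx
      have h2 := hT2 x
      have h3 : 3 * kR ≤ 4 * (c₂ * q) * (x - x₀) ^ 2 := by linarith
      have h4 : r ^ 2 ≤ (x - x₀) ^ 2 := by
        rw [hr2, div_le_iff₀ (by positivity)]
        linarith
      calc r = Real.sqrt (r ^ 2) := (Real.sqrt_sq hr0.le).symm
        _ ≤ Real.sqrt ((x - x₀) ^ 2) := Real.sqrt_le_sqrt h4
        _ = |x - x₀| := Real.sqrt_sq_eq_abs _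
    have hkey2 : 2 * lam ≤ c₁ * q * r * dd := by
      have he1 : c₁ * q * r * dd = 2 * s3 * lam := by
        rw [hrdef, hdddef, hAdef, ← hsq'2]
        field_simp
        ring
      rw [he1]
      have := mul_le_mul_of_nonneg_right hs30 hlam.le
      linarith
    have h2lam : ∀ x ∈ Ep, ∀ y ∈ Ep, G y - G x ≤ |F y - F x| ∧ |F y - F x| < 2 * lam := by
      intro x hx y hy
      constructor
      · exact hGF y x
      · have h1 : |F y - F x| ≤ |F y - (p:ℝ)| + |F x - (p:ℝ)| := by
          have := abs_sub_le (F y) ((p:ℝ)) (F x)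
          rw [abs_sub_comm ((p:ℝ)) (F x)] at this
          linarith
        linarith [hx.2, hy.2]
    have hstepP : ∀ x ∈ Ep, ∀ y ∈ Ep, x₀ ≤ x → x ≤ y → y - x ≤ dd := by
      intro x hx y hy hx₀x hxy
      have h1 := hBrP x y hx₀x hxy
      obtain ⟨h2, h3⟩ := h2lam x hx y hy
      have h4 := hrd x hx
      rw [abs_of_nonneg (by linarith)] at h4
      have h5 : c₁ * q * r * (y - x) ≤ c₁ * q * (x - x₀) * (y - x) :=
        mul_le_mul_of_nonneg_right (mul_le_mul_of_nonneg_left h4 (by positivity))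
          (by linarith)
      have h6 : c₁ * q * r * (y - x) < c₁ * q * r * dd := by linarith [hkey2]
      have h7 : 0 < c₁ * q * r := by positivity
      exact le_of_lt (lt_of_mul_lt_mul_left (by linarith) h7.le)
    have hstepM : ∀ x ∈ Ep, ∀ y ∈ Ep, x ≤ x₀ → y ≤ x → x - y ≤ dd := by
      intro x hx y hy hxx₀ hyx
      have h1 := hBrM x y hxx₀ hyx
      obtain ⟨h2, h3⟩ := h2lam x hx y hy
      have h4 := hrd x hx
      rw [abs_of_nonpos (by linarith), neg_sub] at h4
      have h5 : c₁ * q * r * (x - y) ≤ c₁ * q * (x₀ - x) * (x - y) :=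
        mul_le_mul_of_nonneg_right (mul_le_mul_of_nonneg_left h4 (by positivity))
          (by linarith)
      have h6 : c₁ * q * r * (x - y) < c₁ * q * r * dd := by linarith [hkey2]
      have h7 : 0 < c₁ * q * r := by positivity
      exact le_of_lt (lt_of_mul_lt_mul_left (by linarith) h7.le)
    have hvol : ∀ (S : Set ℝ), (∀ x ∈ S, ∀ y ∈ S, |x - y| ≤ dd) →
        volume S ≤ ENNReal.ofReal (2 * dd) := by
      intro S hS
      rcases S.eq_empty_or_nonempty with h | ⟨z, hz⟩
      · rw [h]; simp
      · have : S ⊆ Icc (z - dd) (z + dd) := by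
          intro x hx
          have := hS x hx z hz
          rw [abs_le] at this
          exact ⟨by linarith [this.1], by linarith [this.2]⟩
        calc volume S ≤ volume (Icc (z - dd) (z + dd)) := measure_mono this
          _ = ENNReal.ofReal (2 * dd) := by rw [Real.volume_Icc]; ring_nf
    have hv1 : volume (Ep ∩ Ici x₀) ≤ ENNReal.ofReal (2 * dd) := by
      apply hvol
      intro x hx y hy
      rcases le_total x y with h | h
      · rw [abs_sub_comm, abs_of_nonneg (by linarith)]
        exact hstepP x hx.1 y hy.1 hx.2 h
      · rw [abs_of_nonneg (by linarith)]
        exact hstepP y hy.1 x hx.1 hy.2 h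
    have hv2 : volume (Ep ∩ Iic x₀) ≤ ENNReal.ofReal (2 * dd) := by
      apply hvol
      intro x hx y hy
      rcases le_total x y with h | h
      · rw [abs_sub_comm, abs_of_nonneg (by linarith)]
        exact hstepM y hy.1 x hx.1 hy.2 h
      · rw [abs_of_nonneg (by linarith)]
        exact hstepM x hx.1 y hy.1 hx.2 h
    have hEsub : Ep ⊆ (Ep ∩ Ici x₀) ∪ (Ep ∩ Iic x₀) := by
      intro x hx
      rcases le_total x₀ x with h | h
      · exact Or.inl ⟨hx, h⟩
      · exact Or.inr ⟨hx, h⟩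
    have hvtot : volume Ep ≤ ENNReal.ofReal (4 * dd) := by
      calc volume Ep ≤ volume ((Ep ∩ Ici x₀) ∪ (Ep ∩ Iic x₀)) := measure_mono hEsub
        _ ≤ volume (Ep ∩ Ici x₀) + volume (Ep ∩ Iic x₀) := measure_union_le _ _
        _ ≤ ENNReal.ofReal (2 * dd) + ENNReal.ofReal (2 * dd) := add_le_add hv1 hv2
        _ = ENNReal.ofReal (4 * dd) := by
            rw [← ENNReal.ofReal_add (by positivity) (by positivity)]; ring_nf
    have h4dd : 4 * dd = A * lam / (sk * sq') := by
      rw [hdddef]; field_simp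
    calc (volume Ep).toReal ≤ 4 * dd :=
        ENNReal.toReal_le_of_le_ofReal (by positivity) hvtot
      _ = A * lam / (sk * sq') := h4dd
  -- CUTOFF
  have cutoff : ∀ p : ℤ, {x ∈ Icc ξ η | |F x - (p : ℝ)| < lam}.Nonempty →
      ((p - p₀).natAbs : ℝ) ≤ B * q := by
    intro p ⟨x, hxI, hxl⟩
    have h1 := htri p x
    have h2 := hT2 x
    have h3 := hdist x hxI
    have h4 : (x - x₀) ^ 2 ≤ D ^ 2 := by
      have := pow_le_pow_left₀ (abs_nonneg (x - x₀)) h3 2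
      rwa [sq_abs] at this
    have h5 : ((p - p₀).natAbs : ℝ) = |(p:ℝ) - (p₀:ℝ)| := by
      rw [Nat.cast_natAbs]; push_cast; ring_nf
    rw [h5]
    have hBq : c₂ * q / 2 * (x - x₀) ^ 2 ≤ c₂ * D ^ 2 / 2 * q := by
      have h6 : c₂ * q / 2 * (x - x₀) ^ 2 ≤ c₂ * q / 2 * D ^ 2 :=
        mul_le_mul_of_nonneg_left h4 (by positivity)
      have h7 : c₂ * q / 2 * D ^ 2 = c₂ * D ^ 2 / 2 * q := by ring
      linarith
    rw [hBdef]
    have h8 : (c₂ * D ^ 2 / 2 + 1) * q = c₂ * D ^ 2 / 2 * q + q := by ring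
    have h9 : |F x - (p:ℝ)| < lam := hxl
    linarith [hT2 x]
  -- THE SUM
  set N : ℕ := ⌊B * q⌋₊ with hNdef
  classical
  set P : Finset ℤ := ((Finset.Icc 1 N).image fun k : ℕ => p₀ + (k : ℤ)) ∪
      ((Finset.Icc 1 N).image fun k : ℕ => p₀ - (k : ℤ)) with hPdef
  have hmemP : ∀ p : ℤ, p ≠ p₀ → ((p - p₀).natAbs : ℝ) ≤ B * q → p ∈ P := by
    intro p hp hle
    set m : ℕ := (p - p₀).natAbs with hmdef
    have hm1 : 1 ≤ m := Nat.one_le_iff_ne_zero.mpr (Int.natAbs_ne_zero.mpr (sub_ne_zero.mpr hp))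
    have hmN : m ≤ N := Nat.le_floor hle
    rw [hPdef, Finset.mem_union]
    rcases le_or_gt p₀ p with h | h
    · left
      rw [Finset.mem_image]
      exact ⟨m, Finset.mem_Icc.mpr ⟨hm1, hmN⟩, by omega⟩
    · right
      rw [Finset.mem_image]
      exact ⟨m, Finset.mem_Icc.mpr ⟨hm1, hmN⟩, by omega⟩
  set S' : Finset {p : ℤ // p ≠ p₀} := P.subtype (· ≠ p₀) with hS'def
  have h0 : ∀ (b : {p : ℤ // p ≠ p₀}), b ∉ S' →
      (volume {x ∈ Icc ξ η | |(j₁ : ℝ) * x + (j₂ : ℝ) * f x - ((b : ℤ) : ℝ)| < lam}).toReal = 0 := by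
    intro b hb
    rw [hS'def, Finset.mem_subtype] at hb
    have hE : {x ∈ Icc ξ η | |(j₁ : ℝ) * x + (j₂ : ℝ) * f x - ((b : ℤ) : ℝ)| < lam} = ∅ := by
      by_contra h
      have hne : {x ∈ Icc ξ η | |F x - ((b : ℤ) : ℝ)| < lam}.Nonempty := by
        rw [hFdef]
        exact Set.nonempty_iff_ne_empty.mpr h
      exact hb (hmemP b b.2 (cutoff b hne))
    rw [hE]
    simp
  rw [tsum_eq_sum h0]
  have hwnn : ∀ p : ℤ, 0 ≤ A * lam / (Real.sqrt (((p - p₀).natAbs : ℝ)) * sq') := by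
    intro p; positivity
  have step1 : ∑ b ∈ S',
      (volume {x ∈ Icc ξ η | |(j₁ : ℝ) * x + (j₂ : ℝ) * f x - ((b : ℤ) : ℝ)| < lam}).toReal
      ≤ ∑ b ∈ S', A * lam / (Real.sqrt ((((b:ℤ) - p₀).natAbs : ℝ)) * sq') := by
    apply Finset.sum_le_sum
    intro b _
    have := key b.1 b.2
    rw [hFdef] at this
    exact this
  apply le_trans step1
  have hsubty := Finset.sum_subtype_eq_sum_filter
      (fun p : ℤ => A * lam / (Real.sqrt (((p - p₀).natAbs : ℝ)) * sq'))
      (p := fun p : ℤ => p ≠ p₀) (s := P)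
  rw [hS'def, hsubty]
  have step2 : ∑ p ∈ P.filter (fun p => p ≠ p₀),
      A * lam / (Real.sqrt (((p - p₀).natAbs : ℝ)) * sq')
      ≤ ∑ p ∈ P, A * lam / (Real.sqrt (((p - p₀).natAbs : ℝ)) * sq') :=
    Finset.sum_le_sum_of_subset_of_nonneg (Finset.filter_subset _ _)
      (fun p _ _ => hwnn p)
  apply le_trans step2
  have hdisj : Disjoint ((Finset.Icc 1 N).image fun k : ℕ => p₀ + (k : ℤ))
      ((Finset.Icc 1 N).image fun k : ℕ => p₀ - (k : ℤ)) := by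
    rw [Finset.disjoint_left]
    intro p hp1 hp2
    rw [Finset.mem_image] at hp1 hp2
    obtain ⟨k, hk, hkp⟩ := hp1
    obtain ⟨k', hk', hkp'⟩ := hp2
    rw [Finset.mem_Icc] at hk hk'
    omega
  rw [hPdef, Finset.sum_union hdisj,
    Finset.sum_image (fun k _ k' _ h => by omega),
    Finset.sum_image (fun k _ k' _ h => by omega)]
  have hterm : ∀ k ∈ Finset.Icc 1 N,
      A * lam / (Real.sqrt ((((p₀ + (k:ℤ)) - p₀).natAbs : ℝ)) * sq')
        = (A * lam / sq') * (1 / Real.sqrt (k : ℝ)) := by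
    intro k _
    have : ((p₀ + (k:ℤ)) - p₀).natAbs = k := by omega
    rw [this]
    ring
  have hterm' : ∀ k ∈ Finset.Icc 1 N,
      A * lam / (Real.sqrt ((((p₀ - (k:ℤ)) - p₀).natAbs : ℝ)) * sq')
        = (A * lam / sq') * (1 / Real.sqrt (k : ℝ)) := by
    intro k _
    have : ((p₀ - (k:ℤ)) - p₀).natAbs = k := by omega
    rw [this]
    ring
  rw [Finset.sum_congr rfl hterm, Finset.sum_congr rfl hterm', ← Finset.mul_sum]
  have hsum := sum_one_div_sqrt N
  have hAl : 0 ≤ A * lam / sq' := by positivity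
  have hNle : Real.sqrt N ≤ Real.sqrt B * sq' := by
    have h1 : (N : ℝ) ≤ B * q := Nat.floor_le (by positivity)
    calc Real.sqrt N ≤ Real.sqrt (B * q) := Real.sqrt_le_sqrt h1
      _ = Real.sqrt B * sq' := Real.sqrt_mul hB0.le q
  have hfin : (A * lam / sq') * (∑ k ∈ Finset.Icc 1 N, (1:ℝ) / Real.sqrt (k:ℝ))
      + (A * lam / sq') * (∑ k ∈ Finset.Icc 1 N, (1:ℝ) / Real.sqrt (k:ℝ))
      ≤ 4 * A * Real.sqrt B * lam := by
    have h1 : (A * lam / sq') * (∑ k ∈ Finset.Icc 1 N, (1:ℝ) / Real.sqrt (k:ℝ))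
        ≤ (A * lam / sq') * (2 * Real.sqrt N) := by
      exact mul_le_mul_of_nonneg_left hsum hAl
    have h2 : (A * lam / sq') * (2 * Real.sqrt N)
        ≤ (A * lam / sq') * (2 * (Real.sqrt B * sq')) := by
      apply mul_le_mul_of_nonneg_left _ hAl
      linarith
    have h3 : (A * lam / sq') * (2 * (Real.sqrt B * sq')) = 2 * A * Real.sqrt B * lam := by
      field_simp
    linarith
  calc (A * lam / sq') * (∑ k ∈ Finset.Icc 1 N, (1:ℝ) / Real.sqrt (k:ℝ))
      + (A * lam / sq') * (∑ k ∈ Finset.Icc 1 N, (1:ℝ) / Real.sqrt (k:ℝ))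
      ≤ 4 * A * Real.sqrt B * lam := hfin
    _ ≤ (4 * A * Real.sqrt B + 1) * lam := by
        have : (4 * A * Real.sqrt B + 1) * lam = 4 * A * Real.sqrt B * lam + lam := by ring
        linarith
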